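/- Let G be an ordinary unweighted graph with minimum degree d_min, let N = D^{-1/2} L D^{-1/2} be its normalized Laplacian, fix δ ∈ (0,1), and let f₁,…,f_ℓ be orthonormal eigenvectors of N with eigenvalues at most 1-δ. Then for every vertex u, Σ_{j=1}^{ℓ} (f_j)_u² ≤ 1/(δ² d_min). -/

import Mathlib

open Matrix

lemma stmt8_sum_dotP {n ℓ : ℕ} (g : Fin ℓ → Fin n → ℝ) (v : Fin n → ℝ) :
    (∑ j, g j) ⬝ᵥ v = ∑ j, g j ⬝ᵥ v := by
  simp only [dotProduct, Finset.sum_apply, Finset.sum_mul]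
  rw [Finset.sum_comm]

lemma stmt8_dotP_sum {n ℓ : ℕ} (g : Fin ℓ → Fin n → ℝ) (v : Fin n → ℝ) :
    v ⬝ᵥ (∑ j, g j) = ∑ j, v ⬝ᵥ g j := by
  simp only [dotProduct, Finset.sum_apply, Finset.mul_sum]
  rw [Finset.sum_comm]

lemma stmt8_bessel {n ℓ : ℕ} (f : Fin ℓ → Fin n → ℝ)
    (horth : ∀ a a', f a ⬝ᵥ f a' = if a = a' then 1 else 0) (x : Fin n → ℝ) :
    ∑ j, (f j ⬝ᵥ x)^2 ≤ x ⬝ᵥ x := by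
  set y := x - ∑ j, (f j ⬝ᵥ x) • f j with hy
  have h0 : 0 ≤ y ⬝ᵥ y := Finset.sum_nonneg fun i _ => mul_self_nonneg _
  have hyy : y ⬝ᵥ y = x ⬝ᵥ x - ∑ j, (f j ⬝ᵥ x)^2 := by
    simp only [hy, sub_dotProduct, dotProduct_sub, stmt8_sum_dotP, stmt8_dotP_sum,
      smul_dotProduct, dotProduct_smul, horth, smul_eq_mul, mul_ite, mul_one, mul_zero,
      Finset.sum_ite_eq', Finset.mem_univ, if_true]
    have h1 : ∀ j : Fin ℓ, x ⬝ᵥ f j = f j ⬝ᵥ x := fun j => dotProduct_comm x (f j)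
    simp only [h1]
    ring_nf
  linarith

/-- For an unweighted graph with minimum degree `d_min`, any orthonormal family of
eigenvectors of the normalized Laplacian with eigenvalues at most `1 - δ` satisfies
`Σⱼ (f_j)_u² ≤ 1/(δ² d_min)` at every vertex `u`. -/
theorem stmt8 {n : ℕ} (G : SimpleGraph (Fin n)) [DecidableRel G.Adj]
    (dmin : ℕ) (hdmin : 1 ≤ dmin) (hdeg : ∀ u, dmin ≤ G.degree u)
    (δ : ℝ) (hδ0 : 0 < δ) (hδ1 : δ < 1)
    (N : Matrix (Fin n) (Fin n) ℝ)
    (hN : N = Matrix.diagonal (fun u => 1 / Real.sqrt (G.degree u)) *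
        (Matrix.diagonal (fun u => (G.degree u : ℝ)) - G.adjMatrix ℝ) *
        Matrix.diagonal (fun u => 1 / Real.sqrt (G.degree u)))
    {ℓ : ℕ} (f : Fin ℓ → (Fin n → ℝ)) (μ : Fin ℓ → ℝ)
    (horth : ∀ a a', f a ⬝ᵥ f a' = if a = a' then 1 else 0)
    (heig : ∀ a, N.mulVec (f a) = μ a • f a)
    (hμ : ∀ a, μ a ≤ 1 - δ) (u : Fin n) :
    ∑ j, (f j u) ^ 2 ≤ 1 / (δ ^ 2 * dmin) := by
  have hd : ∀ v, (0:ℝ) < (G.degree v : ℝ) := by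
    intro v
    exact_mod_cast lt_of_lt_of_le (by exact_mod_cast hdmin) (by exact_mod_cast hdeg v)
  have hsd : ∀ v, (0:ℝ) < Real.sqrt (G.degree v) := fun v => Real.sqrt_pos.mpr (hd v)
  -- entries of N
  have hNapp : ∀ v w, N v w =
      (1 / Real.sqrt (G.degree v)) * (((if v = w then (G.degree v : ℝ) else 0)
        - G.adjMatrix ℝ v w) * (1 / Real.sqrt (G.degree w))) := by
    intro v w
    rw [hN, mul_assoc, Matrix.diagonal_mul, Matrix.mul_diagonal]
    simp [Matrix.sub_apply, Matrix.diagonal_apply]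
  -- symmetry of N
  have hsymm : Nᵀ = N := by
    rw [hN]
    rw [Matrix.transpose_mul, Matrix.transpose_mul, Matrix.diagonal_transpose,
      Matrix.transpose_sub, Matrix.diagonal_transpose, SimpleGraph.transpose_adjMatrix,
      mul_assoc]
  set x : Fin n → ℝ := (1 - N) *ᵥ Pi.single u 1 with hxdef
  have hx : ∀ v, x v = G.adjMatrix ℝ v u /
      (Real.sqrt (G.degree v) * Real.sqrt (G.degree u)) := by
    intro v
    have : x v = (1 - N) v u := by
      rw [hxdef, Matrix.mulVec_single]
      simp
    rw [this, Matrix.sub_apply, hNapp]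
    by_cases hvu : v = u
    · subst hvu
      simp only [if_pos rfl, Matrix.one_apply_eq, SimpleGraph.adjMatrix_apply,
        if_neg (G.irrefl (v := v))]
      field_simp
      rw [Real.sq_sqrt (le_of_lt (hd v)), if_pos trivial, sub_zero, div_self (ne_of_gt (hd v)), zero_div]
      ring
    · simp only [if_neg hvu, Matrix.one_apply_ne hvu, SimpleGraph.adjMatrix_apply]
      field_simp
      ring
  -- f j ⬝ᵥ x = (1 - μ j) * f j u
  have hc : ∀ j, f j ⬝ᵥ x = (1 - μ j) * f j u := by
    intro j
    rw [hxdef, dotProduct_mulVec]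
    have h1 : f j ᵥ* (1 - N) = (1 - μ j) • f j := by
      have : f j ᵥ* (1 - N) = (1 - N)ᵀ *ᵥ f j := by
        rw [← Matrix.vecMul_transpose, Matrix.transpose_transpose]
      rw [this, Matrix.transpose_sub, Matrix.transpose_one, hsymm, Matrix.sub_mulVec,
        Matrix.one_mulVec, heig j, sub_smul, one_smul]
    rw [h1, smul_dotProduct, dotProduct_single, smul_eq_mul, mul_one]
  -- bound on x ⬝ᵥ x
  have hdm : (0:ℝ) < (dmin : ℝ) := by exact_mod_cast hdmin
  have hxx : x ⬝ᵥ x ≤ 1 / (dmin : ℝ) := by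
    have hterm : ∀ v, x v * x v ≤ G.adjMatrix ℝ v u / ((dmin : ℝ) * (G.degree u)) := by
      intro v
      rw [hx v]
      rw [div_mul_div_comm]
      have hA : G.adjMatrix ℝ v u * G.adjMatrix ℝ v u = G.adjMatrix ℝ v u := by
        by_cases h : G.Adj v u <;> simp [h]
      have hA0 : (0:ℝ) ≤ G.adjMatrix ℝ v u := by
        by_cases h : G.Adj v u <;> simp [h]
      rw [hA, mul_mul_mul_comm, Real.mul_self_sqrt (le_of_lt (hd v)),
        Real.mul_self_sqrt (le_of_lt (hd u))]
      gcongr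
      · exact mul_pos hdm (hd u)
      · exact_mod_cast hdeg v
    calc x ⬝ᵥ x ≤ ∑ v, G.adjMatrix ℝ v u / ((dmin : ℝ) * (G.degree u)) :=
          Finset.sum_le_sum fun v _ => hterm v
      _ = (∑ v, G.adjMatrix ℝ v u) / ((dmin : ℝ) * (G.degree u)) := by
          rw [Finset.sum_div]
      _ = (G.degree u : ℝ) / ((dmin : ℝ) * (G.degree u)) := by
          congr 1
          have : ∀ v, G.adjMatrix ℝ v u = G.adjMatrix ℝ u v := by
            intro v; simp [SimpleGraph.adjMatrix_apply, G.adj_comm]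
          simp only [this]
          simp [SimpleGraph.adjMatrix_apply, SimpleGraph.degree, SimpleGraph.neighborFinset_eq_filter, Finset.sum_boole]
      _ = 1 / (dmin : ℝ) := by
          rw [mul_comm, ← div_div, div_self (ne_of_gt (hd u))]
  -- combine
  have hB := stmt8_bessel f horth x
  have hstep : ∀ j, δ^2 * (f j u)^2 ≤ (f j ⬝ᵥ x)^2 := by
    intro j
    rw [hc j, mul_pow]
    apply mul_le_mul_of_nonneg_right _ (sq_nonneg _)
    have hj : δ ≤ 1 - μ j := by linarith [hμ j]
    calc δ^2 ≤ (1 - μ j)^2 := by nlinarith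
      _ = (1 - μ j)^2 := rfl
  have hmain : δ^2 * ∑ j, (f j u)^2 ≤ 1 / (dmin : ℝ) := by
    calc δ^2 * ∑ j, (f j u)^2 = ∑ j, δ^2 * (f j u)^2 := Finset.mul_sum _ _ _
      _ ≤ ∑ j, (f j ⬝ᵥ x)^2 := Finset.sum_le_sum fun j _ => hstep j
      _ ≤ x ⬝ᵥ x := hB
      _ ≤ 1 / (dmin : ℝ) := hxx
  rw [le_div_iff₀ (by positivity)]
  calc (∑ j, (f j u)^2) * (δ^2 * dmin) = (δ^2 * ∑ j, (f j u)^2) * dmin := by ring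
    _ ≤ (1 / (dmin:ℝ)) * dmin := mul_le_mul_of_nonneg_right hmain (le_of_lt hdm)
    _ = 1 := by field_simp
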